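/- arXiv:1707.06491 — 2 statements merged into one kernel-verified Lean document; each statement's English description precedes it below -/
import Mathlib

section
/- Let P, K1, K2 be n-by-n complex matrices with P^2 = P, and set D_j = i[K_j, P] for j = 1, 2, where [A,B] = AB - BA. Then Tr(P [D_1, D_2]) = Tr(P [K_1, K_2]). In particular, the adiabatic (Berry) curvature i·Tr(P [D_1, D_2]) built from the quasi-adiabatic generators equals the Kubo-type expression i·Tr(P [K_1, K_2]). -/
/-- For a projection `P` (`P ^ 2 = P`) and matrices `K₁, K₂`, with
`D_j = i[K_j, P]`, one has `Tr(P [D₁, D₂]) = Tr(P [K₁, K₂])`. -/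
theorem stmt_0 (n : ℕ) (P K₁ K₂ : Matrix (Fin n) (Fin n) ℂ) (hP : P * P = P)
    (D₁ D₂ : Matrix (Fin n) (Fin n) ℂ)
    (hD₁ : D₁ = Complex.I • (K₁ * P - P * K₁))
    (hD₂ : D₂ = Complex.I • (K₂ * P - P * K₂)) :
    Matrix.trace (P * (D₁ * D₂ - D₂ * D₁)) =
      Matrix.trace (P * (K₁ * K₂ - K₂ * K₁)) := by
  subst hD₁ hD₂
  simp only [smul_mul_assoc, mul_smul_comm, smul_smul, Complex.I_mul_I, neg_smul, one_smul,
    smul_sub, sub_sub_sub_cancel_right, Matrix.mul_sub, Matrix.sub_mul, Matrix.mul_neg,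
    Matrix.trace_sub, Matrix.trace_neg, mul_assoc]
  have hA : (P * (K₁ * (P * (K₂ * P)))).trace = (P * (K₁ * (P * K₂))).trace := by
    simp only [← mul_assoc, hP]; rw [Matrix.trace_mul_comm]; simp only [← mul_assoc, hP]
  have hB : (P * (P * (K₁ * (K₂ * P)))).trace = (P * (K₁ * K₂)).trace := by
    simp only [← mul_assoc, hP]; rw [Matrix.trace_mul_comm]; simp only [← mul_assoc, hP]
  have hC : (P * (K₁ * (P * (P * K₂)))).trace = (P * (K₁ * (P * K₂))).trace := by
    simp only [← mul_assoc, hP]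
  have hD : (P * (P * (K₁ * (P * K₂)))).trace = (P * (K₁ * (P * K₂))).trace := by
    simp only [← mul_assoc, hP]
  have hE : (P * (K₂ * (P * (K₁ * P)))).trace = (P * (K₁ * (P * K₂))).trace := by
    simp only [← mul_assoc, hP]; rw [Matrix.trace_mul_comm]; simp only [← mul_assoc, hP]
    rw [Matrix.trace_mul_comm]; simp only [← mul_assoc]
    rw [Matrix.trace_mul_comm]; simp only [← mul_assoc, hP]
  have hF : (P * (P * (K₂ * (K₁ * P)))).trace = (P * (K₂ * K₁)).trace := by
    simp only [← mul_assoc, hP]; rw [Matrix.trace_mul_comm]; simp only [← mul_assoc, hP]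
  have hG : (P * (K₂ * (P * (P * K₁)))).trace = (P * (K₁ * (P * K₂))).trace := by
    simp only [← mul_assoc, hP]
    rw [Matrix.trace_mul_comm]; simp only [← mul_assoc]
    rw [Matrix.trace_mul_comm]; simp only [← mul_assoc, hP]
  have hH : (P * (P * (K₂ * (P * K₁)))).trace = (P * (K₁ * (P * K₂))).trace := by
    simp only [← mul_assoc, hP]
    rw [Matrix.trace_mul_comm]; simp only [← mul_assoc]
    rw [Matrix.trace_mul_comm]; simp only [← mul_assoc, hP]
  linear_combination -hA + hB + hC - hD + hE - hF - hG + hH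
end

section
/- Let H, H' be Hermitian n-by-n complex matrices, let O be any n-by-n complex matrix, and define tau_t^H(X) = exp(itH) X exp(-itH) and tau_t^{H'}(X) = exp(itH') X exp(-itH'). Then for every t >= 0, || tau_t^H(O) - tau_t^{H'}(O) || <= Integral from 0 to t of || [H - H', tau_s^{H'}(O)] || ds, where ||.|| is the operator norm induced by the Euclidean norm on C^n and [A,B] = AB - BA. -/
open Matrix MeasureTheory
open scoped Matrix.Norms.L2Operator

/-- The Heisenberg evolution `τ_t^H(X) = exp(itH) X exp(-itH)`. -/
noncomputable def heis {n : ℕ} (H : Matrix (Fin n) (Fin n) ℂ) (t : ℝ)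
    (X : Matrix (Fin n) (Fin n) ℂ) : Matrix (Fin n) (Fin n) ℂ :=
  NormedSpace.exp (((t : ℂ) * Complex.I) • H) * X *
    NormedSpace.exp (-(((t : ℂ) * Complex.I) • H))

section HeisAux

variable {n : ℕ}

noncomputable instance : CompleteSpace (Matrix (Fin n) (Fin n) ℂ) :=
  FiniteDimensional.complete ℂ _

noncomputable instance : NormedAlgebra ℚ (Matrix (Fin n) (Fin n) ℂ) :=
  NormedAlgebra.restrictScalars ℚ ℂ _

noncomputable def heisEE (M : Matrix (Fin n) (Fin n) ℂ) (s : ℝ) : Matrix (Fin n) (Fin n) ℂ :=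
  NormedSpace.exp (s • M)

lemma smul_eq (M : Matrix (Fin n) (Fin n) ℂ) (s : ℝ) :
    ((s : ℂ) * Complex.I) • M = s • (Complex.I • M) := by
  rw [← smul_smul, Complex.coe_smul]

lemma heisEE_eq (M : Matrix (Fin n) (Fin n) ℂ) (s : ℝ) :
    heisEE M s = NormedSpace.exp (s • M) := by
  rw [heisEE]

lemma hasDerivAt_heisEE (M : Matrix (Fin n) (Fin n) ℂ) (s : ℝ) :
    HasDerivAt (heisEE M) (heisEE M s * M) s := by
  have h := hasDerivAt_exp_smul_const (𝕂 := ℝ) M s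
  have he : heisEE M = fun u : ℝ => NormedSpace.exp (u • M) := funext fun u => heisEE_eq M u
  rw [he]
  simpa using h

lemma commute_heisEE (M : Matrix (Fin n) (Fin n) ℂ) (s : ℝ) : Commute M (heisEE M s) :=
  (Commute.refl M).smul_right s |>.exp_right

lemma heisEE_mul_heisEE_neg (M : Matrix (Fin n) (Fin n) ℂ) (s : ℝ) : heisEE M s * heisEE (-M) s = 1 := by
  rw [heisEE, heisEE, smul_neg, ← NormedSpace.exp_add_of_commute ((Commute.refl (s • M)).neg_right)]
  simp

lemma heisEE_neg_mul_ee (M : Matrix (Fin n) (Fin n) ℂ) (s : ℝ) : heisEE (-M) s * heisEE M s = 1 := by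
  rw [heisEE, heisEE, smul_neg, ← NormedSpace.exp_add_of_commute ((Commute.refl (s • M)).neg_left)]
  simp

lemma heis_eq (H : Matrix (Fin n) (Fin n) ℂ) (s : ℝ) (X : Matrix (Fin n) (Fin n) ℂ) :
    heis H s X = heisEE (Complex.I • H) s * X * heisEE (-(Complex.I • H)) s := by
  rw [heis, heisEE, heisEE, smul_eq, ← smul_neg]

lemma heisEE_mem_unitary {H : Matrix (Fin n) (Fin n) ℂ} (hH : H.IsHermitian) (s : ℝ) :
    heisEE (Complex.I • H) s ∈ unitary (Matrix (Fin n) (Fin n) ℂ) := by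
  apply NormedSpace.exp_mem_unitary_of_mem_skewAdjoint
  rw [← smul_eq]
  refine hH.isSelfAdjoint.smul_mem_skewAdjoint ?_
  rw [skewAdjoint.mem_iff]
  simp [Complex.ext_iff]

lemma heisEE_neg_mem_unitary {H : Matrix (Fin n) (Fin n) ℂ} (hH : H.IsHermitian) (s : ℝ) :
    heisEE (-(Complex.I • H)) s ∈ unitary (Matrix (Fin n) (Fin n) ℂ) := by
  have : -(Complex.I • H) = Complex.I • (-H) := by simp
  rw [this]
  exact heisEE_mem_unitary hH.neg s

lemma norm_conj {H : Matrix (Fin n) (Fin n) ℂ} (hH : H.IsHermitian) (s : ℝ)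
    (X : Matrix (Fin n) (Fin n) ℂ) :
    ‖heisEE (Complex.I • H) s * X * heisEE (-(Complex.I • H)) s‖ = ‖X‖ := by
  rw [mul_assoc, CStarRing.norm_mem_unitary_mul _ (heisEE_mem_unitary hH s),
    CStarRing.norm_mul_mem_unitary _ (heisEE_neg_mem_unitary hH s)]

lemma norm_conj' {H : Matrix (Fin n) (Fin n) ℂ} (hH : H.IsHermitian) (s : ℝ)
    (X : Matrix (Fin n) (Fin n) ℂ) :
    ‖heisEE (-(Complex.I • H)) s * X * heisEE (Complex.I • H) s‖ = ‖X‖ := by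
  rw [mul_assoc, CStarRing.norm_mem_unitary_mul _ (heisEE_neg_mem_unitary hH s),
    CStarRing.norm_mul_mem_unitary _ (heisEE_mem_unitary hH s)]

lemma continuous_heisEE (M : Matrix (Fin n) (Fin n) ℂ) : Continuous (heisEE M) :=
  NormedSpace.exp_continuous.comp (continuous_id.smul continuous_const)

set_option maxHeartbeats 1000000 in
lemma continuous_heis (H : Matrix (Fin n) (Fin n) ℂ) (X : Matrix (Fin n) (Fin n) ℂ) :
    Continuous (fun s => heis H s X) := by
  simp only [heis_eq]
  exact ((continuous_heisEE _).mul continuous_const).mul (continuous_heisEE _)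

end HeisAux

set_option maxHeartbeats 1000000 in
/-- for `t ≥ 0`,
`‖τ_t^H(O) - τ_t^{H'}(O)‖ ≤ ∫₀ᵗ ‖[H - H', τ_s^{H'}(O)]‖ ds`,
where `‖·‖` is the operator norm induced by the Euclidean norm on `ℂⁿ`. -/
theorem stmt_4 (n : ℕ) (H H' O : Matrix (Fin n) (Fin n) ℂ)
    (hH : H.IsHermitian) (hH' : H'.IsHermitian) (t : ℝ) (ht : 0 ≤ t) :
    ‖heis H t O - heis H' t O‖ ≤
      ∫ s in (0:ℝ)..t, ‖(H - H') * heis H' s O - heis H' s O * (H - H')‖ := by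
  set A := Complex.I • H with hA
  set B := Complex.I • H' with hB
  set G : ℝ → Matrix (Fin n) (Fin n) ℂ := fun s => heis H' s O with hGdef
  set F : ℝ → Matrix (Fin n) (Fin n) ℂ := fun s => heisEE (-A) s * G s * heisEE A s with hFdef
  set g : ℝ → Matrix (Fin n) (Fin n) ℂ := fun s =>
    (-Complex.I) • (heisEE (-A) s * ((H - H') * G s - G s * (H - H')) * heisEE A s) with hgdef
  -- derivative of G
  have hG : ∀ s, HasDerivAt G (B * G s - G s * B) s := by
    intro s
    have h1 : HasDerivAt (fun s => heisEE B s * O * heisEE (-B) s)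
        ((heisEE B s * B) * O * heisEE (-B) s + (heisEE B s * O) * (heisEE (-B) s * (-B))) s :=
      (((hasDerivAt_heisEE B s).mul_const O).mul (hasDerivAt_heisEE (-B) s))
    have hc : Commute B (heisEE (-B) s) :=
      (((Commute.refl B).neg_right).smul_right s).exp_right
    have heq : (heisEE B s * B) * O * heisEE (-B) s + (heisEE B s * O) * (heisEE (-B) s * (-B))
        = B * (heisEE B s * O * heisEE (-B) s) - (heisEE B s * O * heisEE (-B) s) * B := by
      rw [← (commute_heisEE B s).eq]
      simp only [mul_assoc, mul_neg]
      rw [← hc.eq]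
      abel
    have h2 := heq ▸ h1
    have : G = fun s => heisEE B s * O * heisEE (-B) s := funext fun s => heis_eq H' s O
    rw [this]
    exact h2
  -- derivative of F
  have hF : ∀ s, HasDerivAt F (g s) s := by
    intro s
    have h1 : HasDerivAt F
        (((heisEE (-A) s * (-A)) * G s + heisEE (-A) s * (B * G s - G s * B)) * heisEE A s
          + (heisEE (-A) s * G s) * (heisEE A s * A)) s :=
      (((hasDerivAt_heisEE (-A) s).mul (hG s)).mul (hasDerivAt_heisEE A s))
    have heq2 : ((heisEE (-A) s * (-A)) * G s + heisEE (-A) s * (B * G s - G s * B)) * heisEE A s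
          + (heisEE (-A) s * G s) * (heisEE A s * A) = g s := by
      rw [hgdef, ← (commute_heisEE A s).eq]
      simp only [hA, hB, smul_sub, sub_smul, smul_mul_assoc, mul_smul_comm, mul_sub, sub_mul,
        add_mul, mul_add, neg_mul, mul_neg, neg_smul, smul_neg, smul_smul, mul_assoc]
      module
    exact heq2 ▸ h1
  -- FTC
  have hcontg : Continuous g := by
    rw [hgdef]
    exact (((continuous_heisEE _).mul (((continuous_const.mul (continuous_heis H' O)).sub
      ((continuous_heis H' O).mul continuous_const)))).mul (continuous_heisEE _)).const_smul (-Complex.I)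
  have hint : ∀ a b : ℝ, IntervalIntegrable g volume a b :=
    fun a b => hcontg.intervalIntegrable a b
  have hFTC : F t - F 0 = ∫ s in (0:ℝ)..t, g s := by
    rw [intervalIntegral.integral_eq_sub_of_hasDerivAt (fun s _ => hF s) (hint 0 t)]
  -- rewrite LHS
  have hF0 : F 0 = O := by
    simp [hFdef, hGdef, heisEE, heis]
  have hkey : heis H t O - heis H' t O = heisEE A t * (F 0 - F t) * heisEE (-A) t := by
    rw [hF0, hFdef, hGdef]
    simp only [mul_sub, sub_mul]
    congr 1
    · exact heis_eq H t O
    · rw [← mul_assoc, ← mul_assoc, mul_assoc (heisEE A t * heisEE (-A) t), mul_assoc (heisEE A t * heisEE (-A) t),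
        heisEE_mul_heisEE_neg, one_mul, mul_assoc, heisEE_mul_heisEE_neg, mul_one]
  rw [hkey, norm_conj hH t _, norm_sub_rev, hFTC]
  calc ‖∫ s in (0:ℝ)..t, g s‖ ≤ ∫ s in (0:ℝ)..t, ‖g s‖ :=
        intervalIntegral.norm_integral_le_integral_norm ht
    _ = ∫ s in (0:ℝ)..t, ‖(H - H') * heis H' s O - heis H' s O * (H - H')‖ := by
        apply intervalIntegral.integral_congr
        intro s _
        rw [hgdef]
        simp only [norm_smul]
        rw [norm_conj' hH s]
        simp [hGdef]
end
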